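/- Let S > 0, let U ⊆ (0,S] be Lebesgue measurable, set β(s) := Leb(U ∩ [0,s]), R := β(S), and α(r) := min{s ∈ [0,S] : β(s) = r}. Let E be a real Banach space and let z : [0,S] → E satisfy z(s) = z(0) + ∫₀^s v(σ) dσ for all s ∈ [0,S], where v : [0,S] → E is Bochner integrable with ‖v(σ)‖ ≤ 1 for a.e. σ ∈ [0,S] and v(σ) = 0 for a.e. σ ∈ [0,S] \ U. Then the reparametrized function z̃ := z ∘ α is 1-Lipschitz on [0,R]: for all ρ, r ∈ [0,R] with ρ ≤ r one has ‖z(α(r)) − z(α(ρ))‖ ≤ r − ρ. (Lemma 5.9.) -/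

import Mathlib

open MeasureTheory

/-- The function `β(s) := Leb(U ∩ [0,s])`. -/
noncomputable def betaFun (U : Set ℝ) (s : ℝ) : ℝ :=
  (volume (U ∩ Set.Icc 0 s)).toReal

/-- The "right inverse" `α(r) := min{s ∈ [0,S] : β(s) = r}`. -/
noncomputable def alphaFun (U : Set ℝ) (S : ℝ) (r : ℝ) : ℝ :=
  sInf {s : ℝ | s ∈ Set.Icc 0 S ∧ betaFun U s = r}

open MeasureTheory Set

lemma betaFun_fin (U : Set ℝ) (s : ℝ) : volume (U ∩ Set.Icc 0 s) ≠ ⊤ := by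
  apply ne_top_of_le_ne_top _ (measure_mono Set.inter_subset_right)
  simp [Real.volume_Icc]

lemma betaFun_mono (U : Set ℝ) : Monotone (betaFun U) := fun a b hab =>
  ENNReal.toReal_mono (betaFun_fin U b)
    (measure_mono (Set.inter_subset_inter_right _ (Set.Icc_subset_Icc_right hab)))

lemma betaFun_le_add (U : Set ℝ) {a b : ℝ} (hab : a ≤ b) :
    betaFun U b ≤ betaFun U a + (b - a) := by
  have hsub : U ∩ Set.Icc 0 b ⊆ (U ∩ Set.Icc 0 a) ∪ Set.Ioc a b := by
    rintro x ⟨hxU, hx0, hxb⟩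
    rcases le_or_gt x a with h | h
    · exact Or.inl ⟨hxU, hx0, h⟩
    · exact Or.inr ⟨h, hxb⟩
  have : volume (U ∩ Set.Icc 0 b) ≤ volume (U ∩ Set.Icc 0 a) + volume (Set.Ioc a b) :=
    (measure_mono hsub).trans (measure_union_le _ _)
  have h2 : ((volume (U ∩ Set.Icc 0 a) + volume (Set.Ioc a b))).toReal
      = betaFun U a + (b - a) := by
    rw [ENNReal.toReal_add (betaFun_fin U a) (by simp [Real.volume_Ioc])]
    simp [betaFun, Real.volume_Ioc, ENNReal.toReal_ofReal (sub_nonneg.mpr hab)]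
  have h3 : volume (U ∩ Set.Icc 0 a) + volume (Set.Ioc a b) ≠ ⊤ := by
    rw [← lt_top_iff_ne_top]
    exact ENNReal.add_lt_top.mpr ⟨(betaFun_fin U a).lt_top, by simp [Real.volume_Ioc]⟩
  have h4 := ENNReal.toReal_mono h3 this
  rw [h2] at h4
  exact h4

lemma betaFun_lipschitz (U : Set ℝ) : LipschitzWith 1 (betaFun U) := by
  apply LipschitzWith.of_dist_le_mul
  intro a b
  wlog hab : b ≤ a generalizing a b
  · rw [dist_comm, dist_comm a b]; exact this b a (le_of_not_ge hab)
  rw [Real.dist_eq, Real.dist_eq, abs_of_nonneg (sub_nonneg.mpr (betaFun_mono U hab)),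
    abs_of_nonneg (sub_nonneg.mpr hab), NNReal.coe_one, one_mul]
  linarith [betaFun_le_add U hab]

lemma betaFun_zero (U : Set ℝ) (S : ℝ) (hUsub : U ⊆ Set.Ioc 0 S) : betaFun U 0 = 0 := by
  have : U ∩ ({0} : Set ℝ) = ∅ := by
    ext x
    simp only [Set.mem_inter_iff, Set.mem_singleton_iff, Set.mem_empty_iff_false, iff_false]
    rintro ⟨hxU, rfl⟩
    exact absurd (hUsub hxU).1 (lt_irrefl 0)
  rw [betaFun, Set.Icc_self]
  simp [this]

lemma betaFun_add (U : Set ℝ) (hU : MeasurableSet U) {a b : ℝ} (ha : 0 ≤ a) (hab : a ≤ b) :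
    volume (U ∩ Set.Icc 0 b) = volume (U ∩ Set.Icc 0 a) + volume (U ∩ Set.Ioc a b) := by
  rw [← measure_union ?_ (hU.inter measurableSet_Ioc)]
  · rw [← Set.inter_union_distrib_left, Set.Icc_union_Ioc_eq_Icc ha hab]
  · have hd : Disjoint (Set.Icc (0:ℝ) a) (Set.Ioc a b) := by
      rw [Set.disjoint_left]
      rintro x ⟨_, hxa⟩ ⟨hax, _⟩
      exact absurd hxa (not_le.mpr hax)
    exact hd.mono Set.inter_subset_right Set.inter_subset_right

lemma betaFun_sub (U : Set ℝ) (hU : MeasurableSet U) {a b : ℝ} (ha : 0 ≤ a) (hab : a ≤ b) :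
    betaFun U b - betaFun U a = (volume (U ∩ Set.Ioc a b)).toReal := by
  have h := betaFun_add U hU ha hab
  have hfin : volume (U ∩ Set.Ioc a b) ≠ ⊤ := by
    apply ne_top_of_le_ne_top _ (measure_mono Set.inter_subset_right)
    simp [Real.volume_Ioc]
  rw [betaFun, betaFun, h, ENNReal.toReal_add (betaFun_fin U a) hfin]
  ring

lemma alphaFun_spec (U : Set ℝ) (S : ℝ) (hS : 0 < S) (hUsub : U ⊆ Set.Ioc 0 S)
    {r : ℝ} (hr : r ∈ Set.Icc 0 (betaFun U S)) :
    alphaFun U S r ∈ Set.Icc 0 S ∧ betaFun U (alphaFun U S r) = r := by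
  set A : Set ℝ := {s : ℝ | s ∈ Set.Icc 0 S ∧ betaFun U s = r}
  have hne : A.Nonempty := by
    have := intermediate_value_Icc hS.le (betaFun_lipschitz U).continuous.continuousOn
    rw [betaFun_zero U S hUsub] at this
    obtain ⟨s, hs, hsr⟩ := this hr
    exact ⟨s, hs, hsr⟩
  have hclosed : IsClosed A := by
    have : A = Set.Icc 0 S ∩ betaFun U ⁻¹' {r} := by ext x; simp [A, Set.mem_setOf_eq]
    rw [this]
    exact isClosed_Icc.inter (isClosed_singleton.preimage (betaFun_lipschitz U).continuous)
  have hbdd : BddBelow A := ⟨0, fun x hx => hx.1.1⟩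
  exact hclosed.csInf_mem hne hbdd
/-- Lemma 5.9: if `z(s) = z(0) + ∫₀^s v(σ) dσ` with `‖v‖ ≤ 1` a.e. on `[0,S]`
and `v = 0` a.e. outside `U`, then the reparametrized function `z̃ = z ∘ α` is
`1`-Lipschitz on `[0,R]`, `R = β(S)`. -/
theorem reparametrized_phase_field_lipschitz
    (S : ℝ) (hS : 0 < S) (U : Set ℝ) (hU : MeasurableSet U)
    (hUsub : U ⊆ Set.Ioc 0 S)
    {E : Type*} [NormedAddCommGroup E] [NormedSpace ℝ E] [CompleteSpace E]
    (z v : ℝ → E)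
    (hv_int : IntegrableOn v (Set.Icc 0 S))
    (hz : ∀ s ∈ Set.Icc (0:ℝ) S, z s = z 0 + ∫ σ in (0:ℝ)..s, v σ)
    (hv_bd : ∀ᵐ σ ∂(volume.restrict (Set.Icc (0:ℝ) S)), ‖v σ‖ ≤ 1)
    (hv0 : ∀ᵐ σ ∂(volume.restrict (Set.Icc (0:ℝ) S \ U)), v σ = 0)
    (ρ r : ℝ) (hρ : ρ ∈ Set.Icc 0 (betaFun U S)) (hr : r ∈ Set.Icc 0 (betaFun U S))
    (hρr : ρ ≤ r) :
    ‖z (alphaFun U S r) - z (alphaFun U S ρ)‖ ≤ r - ρ := by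
  obtain ⟨haI, hbeta_a⟩ := alphaFun_spec U S hS hUsub hρ
  obtain ⟨hbI, hbeta_b⟩ := alphaFun_spec U S hS hUsub hr
  set a := alphaFun U S ρ with ha_def
  set b := alphaFun U S r with hb_def
  rcases eq_or_lt_of_le hρr with hEq | hLt
  · subst hEq
    simp [ha_def, hb_def]
  have hab : a ≤ b := by
    by_contra h
    push_neg at h
    have := betaFun_mono U h.le
    rw [hbeta_a, hbeta_b] at this
    exact absurd this (not_le.mpr hLt)
  -- subset facts
  have hIoc_sub : Set.Ioc a b ⊆ Set.Icc 0 S := fun x hx => ⟨haI.1.trans hx.1.le, hx.2.trans hbI.2⟩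
  -- interval integrability
  have hii : ∀ s ∈ Set.Icc (0:ℝ) S, IntervalIntegrable v volume 0 s := by
    intro s hs
    apply IntegrableOn.intervalIntegrable
    rw [Set.uIcc_of_le hs.1]
    exact hv_int.mono_set (Set.Icc_subset_Icc_right hs.2)
  -- difference as interval integral
  have hdiff : z b - z a = ∫ σ in a..b, v σ := by
    rw [hz b hbI, hz a haI]
    have := intervalIntegral.integral_interval_sub_left (hii b hbI) (hii a haI)
    rw [← this]
    abel
  rw [hdiff, intervalIntegral.integral_of_le hab]
  -- bound the norm by the integral of an indicator
  have key : ∀ᵐ x ∂volume, x ∈ Set.Ioc a b → ‖v x‖ ≤ U.indicator (fun _ => (1:ℝ)) x := by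
    filter_upwards [(ae_restrict_iff' measurableSet_Icc).mp hv_bd,
      (ae_restrict_iff' (measurableSet_Icc.diff hU)).mp hv0] with x h1 h2 hx
    by_cases hxU : x ∈ U
    · rw [Set.indicator_of_mem hxU]
      exact h1 (hIoc_sub hx)
    · rw [Set.indicator_of_notMem hxU, h2 ⟨hIoc_sub hx, hxU⟩]
      simp
  have hkey : ∀ᵐ x ∂volume.restrict (Set.Ioc a b), ‖v x‖ ≤ U.indicator (fun _ => (1:ℝ)) x :=
    (ae_restrict_iff' measurableSet_Ioc).mpr key
  have hIocfin : volume (Set.Ioc a b) < ⊤ := by simp [Real.volume_Ioc]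
  have hint1 : IntegrableOn (fun x => ‖v x‖) (Set.Ioc a b) :=
    MeasureTheory.IntegrableOn.mono_set hv_int.norm hIoc_sub
  have hint2 : IntegrableOn (U.indicator (fun _ => (1:ℝ))) (Set.Ioc a b) := by
    apply Integrable.indicator _ hU
    exact (integrableOn_const_iff).mpr (Or.inr hIocfin)
  calc ‖∫ x in Set.Ioc a b, v x‖ ≤ ∫ x in Set.Ioc a b, ‖v x‖ := norm_integral_le_integral_norm _
    _ ≤ ∫ x in Set.Ioc a b, U.indicator (fun _ => (1:ℝ)) x := integral_mono_ae hint1 hint2 hkey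
    _ = ∫ x in Set.Ioc a b ∩ U, (1:ℝ) := setIntegral_indicator hU
    _ = (volume (Set.Ioc a b ∩ U)).toReal := by simp [Measure.real]
    _ = r - ρ := by
        rw [Set.inter_comm, ← betaFun_sub U hU haI.1 hab, hbeta_a, hbeta_b]
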